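/- Let h₁, h₂ : ℝ → ℝ be convex, nondecreasing, Lipschitz with constants α₁, α₂ ∈ [0,1), and h₁(0) = h₂(0) = 0. Fix t < 0, set y = (t, h₂(t)). Suppose h₁ is C² on an interval (τ, 0] where h₁(s) > t for s ∈ (τ, 0]. Define σ(s) = (h₂(t) − s)/(t − h₁(s)) for s ∈ (τ, 0] (the slope of the line through y and (h₁(s), s)). Then σ is strictly increasing on (τ, 0]. -/
import Mathlib


open Set

/-- monotonicity of the slope function
`σ(s) = (h₂ t − s)/(t − h₁ s)` on `(τ, 0]`. -/
theorem slope_function_strictMono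
    (h₁ h₂ : ℝ → ℝ) (α₁ α₂ : ℝ) (hα₁ : 0 ≤ α₁) (hα₁' : α₁ < 1)
    (hα₂ : 0 ≤ α₂) (hα₂' : α₂ < 1)
    (hc₁ : ConvexOn ℝ univ h₁) (hc₂ : ConvexOn ℝ univ h₂)
    (hm₁ : Monotone h₁) (hm₂ : Monotone h₂)
    (hl₁ : ∀ s t : ℝ, |h₁ s - h₁ t| ≤ α₁ * |s - t|)
    (hl₂ : ∀ s t : ℝ, |h₂ s - h₂ t| ≤ α₂ * |s - t|)
    (h10 : h₁ 0 = 0) (h20 : h₂ 0 = 0)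
    (t τ : ℝ) (ht : t < 0) (hτ : τ < 0)
    (hgt : ∀ s ∈ Ioc τ (0 : ℝ), t < h₁ s)
    (hsmooth : ContDiffOn ℝ 2 h₁ (Ioc τ (0 : ℝ))) :
    StrictMonoOn (fun s => (h₂ t - s) / (t - h₁ s)) (Ioc τ (0 : ℝ)) := by
  intro s₁ hs₁ s₂ hs₂ h12
  have d₁ : 0 < h₁ s₁ - t := by linarith [hgt s₁ hs₁]
  have d₂ : 0 < h₁ s₂ - t := by linarith [hgt s₂ hs₂]
  have hD0 : h₁ s₁ ≤ h₁ s₂ := hm₁ h12.le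
  have hDL : |h₁ s₂ - h₁ s₁| ≤ α₁ * |s₂ - s₁| := hl₁ s₂ s₁
  have hDL' : h₁ s₂ - h₁ s₁ ≤ α₁ * (s₂ - s₁) := by
    rwa [abs_of_nonneg (by linarith), abs_of_nonneg (by linarith)] at hDL
  have hat : t ≤ h₂ t := by
    have h := hl₂ t 0
    rw [h20, sub_zero, sub_zero, abs_of_nonpos ht.le] at h
    nlinarith [neg_abs_le (h₂ t)]
  have hs1 : s₁ ≤ h₁ s₁ := by
    have h := hl₁ s₁ 0
    rw [h10, sub_zero, sub_zero] at h
    have hs₁0 : s₁ ≤ 0 := le_trans h12.le hs₂.2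
    rw [abs_of_nonpos hs₁0] at h
    nlinarith [neg_abs_le (h₁ s₁)]
  have key : (s₁ - h₂ t) * (h₁ s₂ - h₁ s₁) < (s₂ - s₁) * (h₁ s₁ - t) := by
    rcases le_or_gt s₁ (h₂ t) with h | h
    · nlinarith
    · have hDlt : h₁ s₂ - h₁ s₁ < s₂ - s₁ := by nlinarith
      nlinarith
  simp only
  rw [show (h₂ t - s₁)/(t - h₁ s₁) = (s₁ - h₂ t)/(h₁ s₁ - t) by
        rw [← neg_div_neg_eq]; ring_nf,
      show (h₂ t - s₂)/(t - h₁ s₂) = (s₂ - h₂ t)/(h₁ s₂ - t) by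
        rw [← neg_div_neg_eq]; ring_nf]
  rw [div_lt_div_iff₀ d₁ d₂]
  nlinarith [key]
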